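/- Let L be a complete lattice equipped with the upper topology, and let Λ : L → ℝ≥0∞. Then Λ is lower semicontinuous, satisfies Λ(x ⊔ y) = Λ(x) + Λ(y) for all x, y ∈ L, and Λ(⊥) = 0, if and only if there exists x₀ ∈ L such that Λ(x) = 0 for x ≤ x₀ and Λ(x) = ∞ for x ≰ x₀. -/

import Mathlib

open Set Topology

noncomputable section

/-- The topology on `ℝ≥0` induced by the Scott topology on `ℝ≥0∞`:
its nonempty proper open sets are the intervals `(r, ∞)`. -/
def scottNNReal : TopologicalSpace NNReal :=
  TopologicalSpace.generateFrom {s : Set NNReal | ∃ r : NNReal, s = Set.Ioi r}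

/-- Lower semicontinuity of a map into `ℝ≥0∞`, i.e. continuity into `ℝ≥0∞`
with the Scott topology of its usual order. -/
def IsLSC {X : Type*} [TopologicalSpace X] (f : X → ENNReal) : Prop :=
  ∀ r : ENNReal, IsOpen {x : X | r < f x}

/-- A topological cone: addition and scalar multiplication are jointly continuous,
where `ℝ≥0` carries the (subspace) Scott topology. -/
def IsTopologicalCone (C : Type*) [TopologicalSpace C] [Add C] [SMul NNReal C] : Prop :=
  Continuous (fun p : C × C => p.1 + p.2) ∧
    Continuous[@instTopologicalSpaceProd NNReal C scottNNReal _, _]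
      (fun p : NNReal × C => p.1 • p.2)

/-- A linear lower semicontinuous map `C → ℝ≥0∞`; the elements of the dual cone `C*`. -/
def IsLinearLSC {C : Type*} [TopologicalSpace C] [Add C] [SMul NNReal C]
    (Λ : C → ENNReal) : Prop :=
  (∀ x y : C, Λ (x + y) = Λ x + Λ y) ∧
    (∀ (a : NNReal) (x : C), Λ (a • x) = (a : ENNReal) * Λ x) ∧ IsLSC Λ

/-- The specialization preorder: `x ≤ y` iff every open set containing `x` contains `y`. -/
def SpecLE {X : Type*} [TopologicalSpace X] (x y : X) : Prop :=
  ∀ U : Set X, IsOpen U → x ∈ U → y ∈ U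

/-- A set is saturated iff it is upward closed for the specialization preorder. -/
def IsSaturated {X : Type*} [TopologicalSpace X] (A : Set X) : Prop :=
  ∀ x ∈ A, ∀ y : X, SpecLE x y → y ∈ A

/-- Upward closure with respect to the specialization preorder. -/
def upClosure {X : Type*} [TopologicalSpace X] (A : Set X) : Set X :=
  {y : X | ∃ x ∈ A, SpecLE x y}

/-- Convexity of a subset of a cone. -/
def IsConeConvex {C : Type*} [Add C] [SMul NNReal C] (A : Set C) : Prop :=
  ∀ x ∈ A, ∀ y ∈ A, ∀ a : NNReal, a ≤ 1 → a • x + (1 - a) • y ∈ A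

/-- A cone with a topology is locally convex if every point has a neighborhood base
of convex open sets. -/
def IsLocallyConvexCone (C : Type*) [TopologicalSpace C] [Add C] [SMul NNReal C] : Prop :=
  ∀ x : C, ∀ U : Set C, IsOpen U → x ∈ U →
    ∃ V : Set C, IsOpen V ∧ IsConeConvex V ∧ x ∈ V ∧ V ⊆ U

/-- A cone with a topology is locally convex-compact if every point has a neighborhood base
of convex compact sets. -/
def IsLocallyConvexCompactCone (C : Type*) [TopologicalSpace C] [Add C] [SMul NNReal C] : Prop :=
  ∀ x : C, ∀ U : Set C, IsOpen U → x ∈ U →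
    ∃ K : Set C, IsCompact K ∧ IsConeConvex K ∧ x ∈ interior K ∧ K ⊆ U

/-- A continuous valuation on a topological space `X`. -/
structure ContinuousValuation (X : Type*) [TopologicalSpace X] where
  toFun : Set X → ENNReal
  empty' : toFun ∅ = 0
  modular' : ∀ U V : Set X, IsOpen U → IsOpen V →
    toFun (U ∪ V) + toFun (U ∩ V) = toFun U + toFun V
  mono' : ∀ U V : Set X, IsOpen U → IsOpen V → U ⊆ V → toFun U ≤ toFun V
  scott' : ∀ D : Set (Set X), (∀ U ∈ D, IsOpen U) → DirectedOn (· ⊆ ·) D →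
    toFun (⋃₀ D) = ⨆ U ∈ D, toFun U

/-- The integral `∫ h dν = ∫₀^∞ ν({x : h(x) > t}) dt` of a map `h : X → ℝ≥0∞`
against a continuous valuation `ν`. -/
def valIntegral {X : Type*} [TopologicalSpace X] (ν : ContinuousValuation X)
    (h : X → ENNReal) : ENNReal :=
  ∫⁻ t in Set.Ioi (0 : ℝ), ν.toFun {x : X | ENNReal.ofReal t < h x}

/-- A barycenter of a continuous valuation `ν` on a cone `C`: a point `x₀` with
`Λ(x₀) = ∫ Λ dν` for every `Λ ∈ C*`. -/
def IsBarycenter {C : Type*} [TopologicalSpace C] [Add C] [SMul NNReal C]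
    (ν : ContinuousValuation C) (x₀ : C) : Prop :=
  ∀ Λ : C → ENNReal, IsLinearLSC Λ → Λ x₀ = valIntegral ν Λ

/-- The weak topology on the set of continuous valuations, generated by the subbasic
open sets `[U > r] = {ν : ν(U) > r}` for `U` open and `r : ℝ≥0`. -/
def weakTopology (X : Type*) [TopologicalSpace X] :
    TopologicalSpace (ContinuousValuation X) :=
  TopologicalSpace.generateFrom
    {S : Set (ContinuousValuation X) | ∃ (U : Set X) (r : NNReal),
      IsOpen U ∧ S = {ν : ContinuousValuation X | (r : ENNReal) < ν.toFun U}}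

/-- The upper topology on a preorder: the coarsest topology in which every
principal ideal `↓x` is closed. -/
def upperTop (L : Type*) [Preorder L] : TopologicalSpace L :=
  TopologicalSpace.generateFrom {s : Set L | ∃ x : L, s = (Set.Iic x)ᶜ}

/-- On a complete lattice with the upper topology, a map `Λ : L → ℝ≥0∞` is
lower semicontinuous, additive for binary joins, and zero at `⊥` iff it is of the form
`Λ = ∞ · χ_{L ∖ ↓x₀}` for some `x₀ ∈ L`. -/
theorem lsc_join_additive_iff {L : Type*} [CompleteLattice L] (Λ : L → ENNReal) :
    ((∀ r : NNReal, IsOpen[upperTop L] {x : L | (r : ENNReal) < Λ x}) ∧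
      (∀ x y : L, Λ (x ⊔ y) = Λ x + Λ y) ∧ Λ ⊥ = 0) ↔
    ∃ x₀ : L, ∀ x : L, (x ≤ x₀ → Λ x = 0) ∧ (¬ x ≤ x₀ → Λ x = ⊤) := by
  constructor
  · rintro ⟨hlsc, hadd, hbot⟩
    set S : Set L := {x | Λ x = 0} with hS
    have hSbot : (⊥ : L) ∈ S := hbot
    have hSjoin : ∀ s ∈ S, ∀ t ∈ S, s ⊔ t ∈ S := by
      intro s hs t ht
      simp only [hS, mem_setOf_eq] at *
      rw [hadd, hs, ht, add_zero]
    -- key: every upperTop-open set is upward closed, and if it contains sSup S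
    -- then it contains an element of S
    have key : ∀ U : Set L,
        TopologicalSpace.GenerateOpen {s : Set L | ∃ x : L, s = (Set.Iic x)ᶜ} U →
        (∀ y z : L, y ∈ U → y ≤ z → z ∈ U) ∧ (sSup S ∈ U → ∃ s ∈ S, s ∈ U) := by
      intro U hU
      induction hU with
      | basic s hs =>
        obtain ⟨a, rfl⟩ := hs
        constructor
        · intro y z hy hyz hz
          exact hy (le_trans hyz hz)
        · intro h
          by_contra hcon
          push_neg at hcon
          apply h
          simp only [mem_compl_iff, mem_Iic, not_not] at hcon ⊢
          exact sSup_le fun s hs => by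
            have := hcon s hs
            simpa using this
      | univ => exact ⟨fun _ _ _ _ => trivial, fun _ => ⟨⊥, hSbot, trivial⟩⟩
      | inter U V hU hV ihU ihV =>
        constructor
        · intro y z hy hyz
          exact ⟨ihU.1 y z hy.1 hyz, ihV.1 y z hy.2 hyz⟩
        · intro h
          obtain ⟨s, hs, hsU⟩ := ihU.2 h.1
          obtain ⟨t, ht, htV⟩ := ihV.2 h.2
          exact ⟨s ⊔ t, hSjoin s hs t ht,
            ihU.1 s _ hsU le_sup_left, ihV.1 t _ htV le_sup_right⟩
      | sUnion D hD ihD =>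
        constructor
        · rintro y z ⟨V, hV, hy⟩ hyz
          exact ⟨V, hV, (ihD V hV).1 y z hy hyz⟩
        · rintro ⟨V, hV, hmem⟩
          obtain ⟨s, hs, hsV⟩ := (ihD V hV).2 hmem
          exact ⟨s, hs, V, hV, hsV⟩
    have h0 : Λ (sSup S) = 0 := by
      by_contra h
      have hpos : (((0 : NNReal) : ENNReal)) < Λ (sSup S) := by
        simpa using pos_iff_ne_zero.2 h
      have hopen := hlsc 0
      obtain ⟨s, hs, hsU⟩ := (key _ hopen).2 hpos
      simp only [hS, mem_setOf_eq] at hs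
      simp [hs] at hsU
    refine ⟨sSup S, fun x => ⟨?_, ?_⟩⟩
    · intro hx
      have : Λ (x ⊔ sSup S) = Λ x + Λ (sSup S) := hadd x (sSup S)
      rw [sup_eq_right.2 hx, h0, add_zero] at this
      exact this.symm
    · intro hx
      have hne : Λ x ≠ 0 := fun h => hx (le_sSup h)
      by_contra htop
      have hdup : Λ x = Λ x + Λ x := by
        have := hadd x x
        rwa [sup_idem] at this
      have : Λ x + 0 = Λ x + Λ x := by rw [add_zero]; exact hdup
      exact hne (WithTop.add_left_cancel htop this).symm
  · rintro ⟨x₀, hx⟩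
    refine ⟨?_, ?_, (hx ⊥).1 bot_le⟩
    · intro r
      have heq : {x : L | (r : ENNReal) < Λ x} = (Set.Iic x₀)ᶜ := by
        ext x
        simp only [mem_setOf_eq, mem_compl_iff, mem_Iic]
        constructor
        · intro h hle
          rw [(hx x).1 hle] at h
          exact (not_lt.2 zero_le) h
        · intro h
          rw [(hx x).2 h]
          exact ENNReal.coe_lt_top
      rw [heq]
      exact TopologicalSpace.GenerateOpen.basic _ ⟨x₀, rfl⟩
    · intro x y
      by_cases hxle : x ≤ x₀ <;> by_cases hyle : y ≤ x₀
      · rw [(hx _).1 (sup_le hxle hyle), (hx _).1 hxle, (hx _).1 hyle, add_zero]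
      · rw [(hx _).2 (fun h => hyle (le_sup_right.trans h)), (hx _).2 hyle,
          add_top]
      · rw [(hx _).2 (fun h => hxle (le_sup_left.trans h)), (hx _).2 hxle,
          top_add]
      · rw [(hx _).2 (fun h => hxle (le_sup_left.trans h)), (hx _).2 hxle,
          top_add]
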